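/- Corollary to Theorem 1 (bilinear Ramsey bound case, a = b = c = 1): Let G be an undirected side information graph on n vertices such that for all positive integers i and j, every induced subgraph of G on at least i·j vertices contains a clique of size i or an independent set of size j. Then the clique covering scheme approximates the broadcast rate within a multiplicative factor of n^{2/3}; that is, χ(Ḡ) ≤ n^{2/3} · β(G). -/

import Mathlib

/-- A `(t, r)` index code for the side-information relation `E` on vertex type `V`:
an edge `i → j` (i.e., `E i j`) means that receiver `j` has message `i` as side
information.  Messages are `t`-bit strings `Fin t → Bool`, the broadcast index is an
`r`-bit string `Fin r → Bool`, and every receiver `j` can recover its message `x j`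
from the index and its side information. -/
structure IndexCode {V : Type*} (E : V → V → Prop) (t r : ℕ) where
  enc : (V → (Fin t → Bool)) → (Fin r → Bool)
  dec : ∀ j : V, (Fin r → Bool) → (({i : V // E i j}) → (Fin t → Bool)) → (Fin t → Bool)
  correct : ∀ (x : V → (Fin t → Bool)) (j : V),
    dec j (enc x) (fun i => x i.1) = x j

/-- The broadcast rate `β = inf { r / t : a (t, r) index code exists }`. -/
noncomputable def broadcastRate {V : Type*} (E : V → V → Prop) : ℝ :=
  sInf { q : ℝ | ∃ t r : ℕ, 0 < t ∧ Nonempty (IndexCode E t r) ∧ q = (r : ℝ) / t }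

/-- The trivial index code broadcasting all `n` messages. -/
def trivialCode (n : ℕ) (G : SimpleGraph (Fin n)) : IndexCode G.Adj 1 n where
  enc := fun x k => x k 0
  dec := fun j idx _ => fun _ => idx j
  correct := by
    intro x j
    funext i
    have : i = 0 := Subsingleton.elim _ _
    simp [this]

/-- Lower bound on the broadcast rate: any independent set gives a lower bound. -/
lemma rate_lb (n : ℕ) (G : SimpleGraph (Fin n)) (S : Finset (Fin n))
    (hS : Gᶜ.IsClique (S : Set (Fin n))) :
    (S.card : ℝ) ≤ broadcastRate G.Adj := by
  have hne : { q : ℝ | ∃ t r : ℕ, 0 < t ∧ Nonempty (IndexCode G.Adj t r) ∧ q = (r : ℝ) / t }.Nonempty :=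
    ⟨(n : ℝ)/1, 1, n, one_pos, ⟨trivialCode n G⟩, by norm_num⟩
  apply le_csInf hne
  rintro q ⟨t, r, ht, ⟨code⟩, rfl⟩
  classical
  set ext : ({v // v ∈ S} → (Fin t → Bool)) → (Fin n → (Fin t → Bool)) :=
    fun y v => if h : v ∈ S then y ⟨v, h⟩ else fun _ => false with hext
  have hinj : Function.Injective (fun y => code.enc (ext y)) := by
    intro y y' h
    funext v
    obtain ⟨j, hj⟩ := v
    have hside : (fun i : {i // G.Adj i j} => ext y i.1) = (fun i => ext y' i.1) := by
      funext i
      obtain ⟨i, hi⟩ := i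
      have hiS : i ∉ S := by
        intro hiS
        have hne' : i ≠ j := G.ne_of_adj hi
        have := hS hiS hj hne'
        exact (this.2 : ¬ G.Adj i j) hi
      simp [hext, hiS]
    have h1 := code.correct (ext y) j
    have h2 := code.correct (ext y') j
    have : code.dec j (code.enc (ext y)) (fun i => ext y i.1)
        = code.dec j (code.enc (ext y')) (fun i => ext y' i.1) := by
      simp only at h
      rw [h, hside]
    rw [h1, h2] at this
    simpa [hext, hj] using this
  have hcard : (2:ℕ)^(t * S.card) ≤ 2^r := by
    have := Fintype.card_le_of_injective _ hinj
    simpa [Fintype.card_fun, Fintype.card_coe, ← pow_mul] using this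
  have hkey : t * S.card ≤ r := by
    exact (pow_le_pow_iff_right₀ (by norm_num)).mp hcard
  rw [le_div_iff₀ (by exact_mod_cast ht)]
  calc (S.card : ℝ) * t = (t * S.card : ℕ) := by push_cast; ring
  _ ≤ (r : ℕ) := by exact_mod_cast hkey

/-- Greedy clique covering using the Ramsey property. -/
lemma cover_lemma (n : ℕ) (G : SimpleGraph (Fin n))
    (hRamsey : ∀ i j : ℕ, 0 < i → 0 < j → ∀ S : Finset (Fin n),
      i * j ≤ S.card →
      (∃ T ⊆ S, T.card = i ∧ G.IsClique (T : Set (Fin n))) ∨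
      (∃ T ⊆ S, T.card = j ∧ Gᶜ.IsClique (T : Set (Fin n))))
    (i j : ℕ) (hi : 0 < i) (hj : 0 < j)
    (hind : ∀ T : Finset (Fin n), Gᶜ.IsClique (T : Set (Fin n)) → T.card < j) :
    ∀ (S : Finset (Fin n)), ∃ P : Finset (Finset (Fin n)),
      (∀ T ∈ P, G.IsClique (T : Set (Fin n))) ∧ (∀ v ∈ S, ∃ T ∈ P, v ∈ T) ∧
      i * P.card ≤ S.card + (i - 1) * (i * j - 1) := by
  classical
  suffices H : ∀ (m : ℕ) (S : Finset (Fin n)), S.card = m →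
      ∃ P : Finset (Finset (Fin n)),
      (∀ T ∈ P, G.IsClique (T : Set (Fin n))) ∧ (∀ v ∈ S, ∃ T ∈ P, v ∈ T) ∧
      i * P.card ≤ S.card + (i - 1) * (i * j - 1) by
    intro S; exact H S.card S rfl
  intro m
  induction m using Nat.strong_induction_on with
  | _ m IH =>
  intro S hn
  subst hn
  by_cases hsmall : S.card < i * j
  · refine ⟨S.image (fun v => ({v} : Finset (Fin n))), ?_, ?_, ?_⟩
    · intro T hT
      obtain ⟨v, _, rfl⟩ := Finset.mem_image.mp hT
      simpa using G.isClique_singleton v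
    · intro v hv
      exact ⟨{v}, Finset.mem_image.mpr ⟨v, hv, rfl⟩, Finset.mem_singleton_self v⟩
    · have h1 : (S.image (fun v => ({v} : Finset (Fin n)))).card ≤ S.card :=
        Finset.card_image_le (f := fun v => ({v} : Finset (Fin n))) (s := S)
      have h2 : S.card ≤ i * j - 1 := by omega
      obtain ⟨k, rfl⟩ : ∃ k, i = k + 1 := ⟨i - 1, by omega⟩
      calc (k+1) * (S.image (fun v => ({v} : Finset (Fin n)))).card
          ≤ (k+1) * S.card := Nat.mul_le_mul_left _ h1
      _ = S.card + k * S.card := by ring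
      _ ≤ S.card + k * ((k+1) * j - 1) :=
          Nat.add_le_add_left (Nat.mul_le_mul_left _ h2) _
      _ = S.card + ((k+1) - 1) * ((k+1) * j - 1) := by simp
  · push_neg at hsmall
    rcases hRamsey i j hi hj S hsmall with ⟨T, hTS, hTcard, hTcl⟩ | ⟨T, hTS2, hTcard, hTind⟩
    · have heq : (S \ T).card + T.card = S.card :=
        Finset.card_sdiff_add_card_eq_card hTS
      have hss : (S \ T).card < S.card := by omega
      obtain ⟨P', hP'cl, hP'cov, hP'card⟩ := IH (S \ T).card hss (S \ T) rfl
      refine ⟨insert T P', ?_, ?_, ?_⟩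
      · intro U hU
        rcases Finset.mem_insert.mp hU with rfl | hU
        · exact hTcl
        · exact hP'cl U hU
      · intro v hv
        by_cases hvT : v ∈ T
        · exact ⟨T, Finset.mem_insert_self _ _, hvT⟩
        · obtain ⟨U, hU, hvU⟩ := hP'cov v (Finset.mem_sdiff.mpr ⟨hv, hvT⟩)
          exact ⟨U, Finset.mem_insert_of_mem hU, hvU⟩
      · have hc : (insert T P').card ≤ P'.card + 1 := Finset.card_insert_le _ _
        have hsd : (S \ T).card = S.card - i := by omega
        have := hP'card
        rw [hsd] at this
        have hiS : i ≤ S.card := le_trans (Nat.le_mul_of_pos_right i hj) hsmall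
        calc i * (insert T P').card ≤ i * (P'.card + 1) := Nat.mul_le_mul_left _ hc
        _ = i * P'.card + i := by ring
        _ ≤ (S.card - i + (i - 1) * (i * j - 1)) + i := Nat.add_le_add_right this i
        _ = S.card + (i - 1) * (i * j - 1) := by omega
    · exact absurd (hind T hTind) (by omega)

/-- A covering of all vertices by cliques of `G` yields a coloring of `Gᶜ`. -/
lemma colorable_of_cover (n : ℕ) (G : SimpleGraph (Fin n)) (P : Finset (Finset (Fin n)))
    (hcl : ∀ T ∈ P, G.IsClique (T : Set (Fin n)))
    (hcov : ∀ v : Fin n, ∃ T ∈ P, v ∈ T) : Gᶜ.Colorable P.card := by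
  classical
  have hex : ∀ v : Fin n, ∃ T : {T // T ∈ P}, v ∈ T.1 := by
    intro v
    obtain ⟨T, hT, hvT⟩ := hcov v
    exact ⟨⟨T, hT⟩, hvT⟩
  have col : Gᶜ.Coloring {T // T ∈ P} := SimpleGraph.Coloring.mk
    (fun v => (hex v).choose)
    (by
      intro v w hadj heq
      have hv : v ∈ (hex v).choose.1 := (hex v).choose_spec
      have hw : w ∈ (hex w).choose.1 := (hex w).choose_spec
      rw [← heq] at hw
      have hT := hcl _ (hex v).choose.2
      have hne : v ≠ w := hadj.ne
      have hGadj : G.Adj v w := hT (Finset.mem_coe.mpr hv) (Finset.mem_coe.mpr hw) hne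
      exact ((G.compl_adj v w).mp hadj).2 hGadj)
  simpa [Fintype.card_coe] using col.colorable

lemma key_nat (a n : ℕ) (h2 : 2 ≤ a) (hn : a^3 < n) (h27 : a = 2 → 27 ≤ n) :
    64*(a+1)^3 ≤ a^6*n := by
  rcases eq_or_lt_of_le h2 with h|h3
  · subst h
    have : 27 ≤ n := h27 rfl
    calc 64*(2+1)^3 = 64*27 := by norm_num
    _ ≤ 64*n := by omega
    _ = 2^6*n := by norm_num
  · have h3' : 3 ≤ a := h3
    have e1 : (a+1)^3 ≤ 8*a^3 := by
      calc (a+1)^3 ≤ (2*a)^3 := Nat.pow_le_pow_left (by omega) 3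
      _ = 8*a^3 := by ring
    have e2 : (729:ℕ) ≤ a^6 := by
      calc (729:ℕ) = 3^6 := by norm_num
      _ ≤ a^6 := Nat.pow_le_pow_left h3' 6
    calc 64*(a+1)^3 ≤ 64*(8*a^3) := Nat.mul_le_mul_left _ e1
    _ = 512*a^3 := by ring
    _ ≤ a^6*a^3 := by
        calc 512*a^3 ≤ 729*a^3 := Nat.mul_le_mul_right _ (by norm_num)
        _ ≤ a^6*a^3 := Nat.mul_le_mul_right _ e2
    _ ≤ a^6*n := Nat.mul_le_mul_left _ (le_of_lt hn)

lemma small_nat : ∀ m : ℕ, 9 ≤ m → m ≤ 26 → (m+5)^3 ≤ 64*m^2 := by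
  intro m h1 h2
  interval_cases m <;> norm_num

lemma cube_le {a b : ℝ} (ha : 0 ≤ a) (hb : 0 ≤ b) (h : a^3 ≤ b^3) : a ≤ b :=
  (pow_le_pow_iff_left₀ ha hb (by norm_num)).mp h

/-- The independence number: an upper bound on all independent sets that also
lower-bounds the broadcast rate. -/
lemma exists_alpha (n : ℕ) (G : SimpleGraph (Fin n)) :
    ∃ a : ℕ, (∀ T : Finset (Fin n), Gᶜ.IsClique (T : Set (Fin n)) → T.card ≤ a) ∧
      (a : ℝ) ≤ broadcastRate G.Adj ∧ (0 < n → 1 ≤ a) := by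
  classical
  set 𝒜 : Finset (Finset (Fin n)) :=
    Finset.univ.filter (fun T : Finset (Fin n) => Gᶜ.IsClique (T : Set (Fin n))) with h𝒜
  refine ⟨𝒜.sup Finset.card, ?_, ?_, ?_⟩
  · intro T hT
    exact Finset.le_sup (Finset.mem_filter.mpr ⟨Finset.mem_univ _, hT⟩)
  · have h𝒜ne : 𝒜.Nonempty := ⟨∅, Finset.mem_filter.mpr ⟨Finset.mem_univ _, by simp⟩⟩
    obtain ⟨S₀, hS₀mem, hS₀sup⟩ := Finset.exists_mem_eq_sup 𝒜 h𝒜ne Finset.card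
    have hS₀cl : Gᶜ.IsClique (S₀ : Set (Fin n)) := (Finset.mem_filter.mp hS₀mem).2
    rw [hS₀sup]
    exact rate_lb n G S₀ hS₀cl
  · intro hn
    have hcl : Gᶜ.IsClique (({⟨0, hn⟩} : Finset (Fin n)) : Set (Fin n)) := by simp
    have hmem : ({⟨0, hn⟩} : Finset (Fin n)) ∈ 𝒜 :=
      Finset.mem_filter.mpr ⟨Finset.mem_univ _, hcl⟩
    have := Finset.le_sup (f := Finset.card) hmem
    simpa using this

/-- **Corollary to Theorem 1 (bilinear Ramsey case `a = b = c = 1`).**  If `G` is an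
undirected side information graph on `n` vertices such that for all positive integers
`i, j`, every induced subgraph of `G` on at least `i * j` vertices contains a clique of
size `i` or an independent set of size `j`, then `χ(Ḡ) ≤ n^(2/3) * β(G)`. -/
theorem corollary_bilinear (n : ℕ) (G : SimpleGraph (Fin n))
    (hRamsey : ∀ i j : ℕ, 0 < i → 0 < j → ∀ S : Finset (Fin n),
      i * j ≤ S.card →
      (∃ T ⊆ S, T.card = i ∧ G.IsClique (T : Set (Fin n))) ∨
      (∃ T ⊆ S, T.card = j ∧ Gᶜ.IsClique (T : Set (Fin n)))) :
    ((Gᶜ.chromaticNumber.toNat : ℝ)) ≤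
      (n : ℝ) ^ ((2 : ℝ) / 3) * broadcastRate G.Adj := by
  classical
  obtain ⟨a, hαle, hβ, hα1⟩ := exists_alpha n G
  have hind : ∀ T : Finset (Fin n), Gᶜ.IsClique (T : Set (Fin n)) → T.card < a + 1 := by
    intro T hT; exact Nat.lt_succ_of_le (hαle T hT)
  -- main step: a coloring of `Gᶜ` with few colors
  obtain ⟨c, hcol, hcube⟩ : ∃ c : ℕ, Gᶜ.Colorable c ∧
      (c : ℝ)^3 ≤ (n : ℝ)^2 * (a : ℝ)^3 := by
    by_cases hcase1 : n ≤ a^3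
    · -- cover by singletons
      obtain ⟨P, hcl, hcov, hcard⟩ :=
        cover_lemma n G hRamsey 1 (a+1) one_pos (Nat.succ_pos a) hind Finset.univ
      refine ⟨P.card, colorable_of_cover n G P hcl
        (fun v => hcov v (Finset.mem_univ v)), ?_⟩
      have hPn : P.card ≤ n := by simpa using hcard
      have : P.card^3 ≤ n^2 * a^3 := by
        calc P.card^3 ≤ n^3 := Nat.pow_le_pow_left hPn 3
        _ = n^2 * n := by ring
        _ ≤ n^2 * a^3 := Nat.mul_le_mul_left _ hcase1
      exact_mod_cast this
    · push_neg at hcase1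
      have hn1 : 0 < n := lt_of_le_of_lt (Nat.zero_le _) hcase1
      have ha1 : 1 ≤ a := hα1 hn1
      by_cases hcase2 : a ≤ 1
      · -- `a = 1`: the graph is complete, one clique covers everything
        have haeq : a = 1 := le_antisymm hcase2 ha1
        have hcomplete : G.IsClique ((Finset.univ : Finset (Fin n)) : Set (Fin n)) := by
          intro v _ w _ hne
          by_contra hna
          have hpair : Gᶜ.IsClique (({v, w} : Finset (Fin n)) : Set (Fin n)) := by
            have hadj : Gᶜ.Adj v w := (G.compl_adj v w).mpr ⟨hne, hna⟩
            simp only [Finset.coe_insert, Finset.coe_singleton]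
            exact SimpleGraph.IsClique.insert (by simp)
              (fun b hb _ => by simp at hb; subst hb; exact hadj)
          have h2 := hαle _ hpair
          rw [Finset.card_insert_of_notMem (by simp [hne]), Finset.card_singleton] at h2
          omega
        refine ⟨({Finset.univ} : Finset (Finset (Fin n))).card, colorable_of_cover n G _
          (by intro T hT; simp at hT; subst hT; exact hcomplete)
          (fun v => ⟨Finset.univ, Finset.mem_singleton_self _, Finset.mem_univ v⟩), ?_⟩
        have : ((({Finset.univ} : Finset (Finset (Fin n))).card : ℕ) : ℝ) = 1 := by simp
        rw [this]
        have h1n : (1:ℝ) ≤ (n:ℝ) := by exact_mod_cast hn1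
        have h1a : (1:ℝ) ≤ (a:ℝ) := by exact_mod_cast ha1
        have e1 : (1:ℝ) ≤ (n:ℝ)^2 := by nlinarith
        have e2 : (1:ℝ) ≤ (a:ℝ)^3 := by
          calc (1:ℝ) = 1^3 := by norm_num
          _ ≤ (a:ℝ)^3 := pow_le_pow_left₀ (by norm_num) h1a 3
        nlinarith
      · push_neg at hcase2
        have ha2 : 2 ≤ a := hcase2
        by_cases hcase3 : a = 2 ∧ n ≤ 26
        · -- small case: `a = 2`, `9 ≤ n ≤ 26`, use cliques of size 2
          obtain ⟨ha2', hn26⟩ := hcase3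
          obtain ⟨P, hcl, hcov, hcard⟩ :=
            cover_lemma n G hRamsey 2 (a+1) two_pos (Nat.succ_pos a) hind Finset.univ
          refine ⟨P.card, colorable_of_cover n G P hcl
            (fun v => hcov v (Finset.mem_univ v)), ?_⟩
          rw [ha2'] at hcard
          have h2c : 2 * P.card ≤ n + 5 := by simpa using hcard
          have hn9 : 9 ≤ n := by
            have : a^3 = 8 := by rw [ha2']; norm_num
            omega
          have hkey : (n+5)^3 ≤ 64 * n^2 := small_nat n hn9 hn26
          have h8 : 8 * P.card^3 ≤ 64 * n^2 := by
            calc 8 * P.card^3 = (2 * P.card)^3 := by ring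
            _ ≤ (n+5)^3 := Nat.pow_le_pow_left h2c 3
            _ ≤ 64 * n^2 := hkey
          have : P.card^3 ≤ n^2 * a^3 := by
            rw [ha2']; omega
          exact_mod_cast this
        · -- general case
          have h27 : a = 2 → 27 ≤ n := by
            intro h; by_contra hlt; exact hcase3 ⟨h, by omega⟩
          have hd := key_nat a n ha2 hcase1 h27
          set j : ℕ := a + 1 with hjdef
          have hj0 : (0:ℝ) < (j:ℝ) := by positivity
          have hn0 : (0:ℝ) < (n:ℝ) := by exact_mod_cast hn1
          set x : ℝ := Real.sqrt ((n:ℝ)/(j:ℝ)) with hxdef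
          set s : ℝ := Real.sqrt ((n:ℝ)*(j:ℝ)) with hsdef
          have hx0 : 0 ≤ x := Real.sqrt_nonneg _
          have hs0 : 0 ≤ s := Real.sqrt_nonneg _
          have hxformula : x = Real.sqrt (n:ℝ) / Real.sqrt (j:ℝ) :=
            Real.sqrt_div hn0.le _
          have hsformula : s = Real.sqrt (n:ℝ) * Real.sqrt (j:ℝ) :=
            Real.sqrt_mul hn0.le _
          have hsqrtj_pos : 0 < Real.sqrt (j:ℝ) := Real.sqrt_pos.mpr hj0
          have hxj : x * (j:ℝ) = s := by
            rw [hxformula, hsformula]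
            rw [div_mul_eq_mul_div, mul_comm]
            rw [show (j:ℝ) * Real.sqrt (n:ℝ) / Real.sqrt (j:ℝ)
              = Real.sqrt (n:ℝ) * ((j:ℝ) / Real.sqrt (j:ℝ)) by ring]
            rw [Real.div_sqrt]
          have hxs : x * s = (n:ℝ) := by
            rw [hxformula, hsformula]
            rw [show Real.sqrt (n:ℝ) / Real.sqrt (j:ℝ) * (Real.sqrt (n:ℝ) * Real.sqrt (j:ℝ))
              = (Real.sqrt (n:ℝ) * Real.sqrt (n:ℝ)) * (Real.sqrt (j:ℝ) / Real.sqrt (j:ℝ)) by ring]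
            rw [div_self (ne_of_gt hsqrtj_pos), mul_one, Real.mul_self_sqrt hn0.le]
          set i : ℕ := ⌈x⌉₊ with hidef
          have hxpos : 0 < x := by
            apply Real.sqrt_pos.mpr
            positivity
          have hipos : 0 < i := Nat.ceil_pos.mpr hxpos
          obtain ⟨P, hcl, hcov, hcard⟩ :=
            cover_lemma n G hRamsey i j hipos (Nat.succ_pos a) hind Finset.univ
          refine ⟨P.card, colorable_of_cover n G P hcl
            (fun v => hcov v (Finset.mem_univ v)), ?_⟩
          -- cast greedy bound to ℝ
          have hcard2 : i * P.card ≤ n + (i - 1) * (i * j) := by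
            have : (i - 1) * (i * j - 1) ≤ (i - 1) * (i * j) :=
              Nat.mul_le_mul_left _ (Nat.sub_le _ _)
            calc i * P.card ≤ Finset.univ.card + (i - 1) * (i * j - 1) := hcard
            _ = n + (i - 1) * (i * j - 1) := by rw [Finset.card_univ, Fintype.card_fin]
            _ ≤ n + (i - 1) * (i * j) := Nat.add_le_add_left this _
          have hreal : (i:ℝ) * P.card ≤ (n:ℝ) + ((i:ℝ) - 1) * ((i:ℝ) * (j:ℝ)) := by
            have := hcard2
            have hc : ((i - 1 : ℕ) : ℝ) = (i:ℝ) - 1 := by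
              rw [Nat.cast_sub hipos]; simp
            calc (i:ℝ) * P.card = ((i * P.card : ℕ) : ℝ) := by push_cast; ring
            _ ≤ ((n + (i - 1) * (i * j) : ℕ) : ℝ) := by exact_mod_cast this
            _ = (n:ℝ) + ((i:ℝ) - 1) * ((i:ℝ) * (j:ℝ)) := by push_cast [hc]; ring
          have hxlei : x ≤ (i:ℝ) := Nat.le_ceil x
          have hile : (i:ℝ) - 1 ≤ x := by
            have := Nat.ceil_lt_add_one hx0
            rw [← hidef] at this
            linarith
          -- conclude `P.card ≤ 2 s`
          have hPle : (P.card : ℝ) ≤ 2 * s := by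
            have h1 : (n:ℝ) ≤ (i:ℝ) * s := by
              calc (n:ℝ) = x * s := hxs.symm
              _ ≤ (i:ℝ) * s := by apply mul_le_mul_of_nonneg_right hxlei hs0
            have h2 : ((i:ℝ) - 1) * ((i:ℝ) * (j:ℝ)) ≤ (i:ℝ) * s := by
              calc ((i:ℝ) - 1) * ((i:ℝ) * (j:ℝ)) = (((i:ℝ) - 1) * (j:ℝ)) * (i:ℝ) := by ring
              _ ≤ (x * (j:ℝ)) * (i:ℝ) := by
                  apply mul_le_mul_of_nonneg_right
                  · exact mul_le_mul_of_nonneg_right hile hj0.le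
                  · positivity
              _ = (i:ℝ) * s := by rw [hxj]; ring
            have h3 : (i:ℝ) * P.card ≤ (i:ℝ) * (2 * s) := by linarith
            exact le_of_mul_le_mul_left h3 (by exact_mod_cast hipos)
          -- final computation
          have hs2 : s^2 = (n:ℝ) * (j:ℝ) := Real.sq_sqrt (by positivity)
          have h64 : 64 * (j:ℝ)^3 ≤ (a:ℝ)^6 * (n:ℝ) := by
            have := hd
            have : ((64 * (a+1)^3 : ℕ) : ℝ) ≤ ((a^6 * n : ℕ) : ℝ) := by exact_mod_cast this
            push_cast at this
            rw [hjdef]; push_cast; linarith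
          have hub : 8 * ((n:ℝ) * (j:ℝ)) * s ≤ (n:ℝ)^2 * (a:ℝ)^3 := by
            have hL0 : 0 ≤ 8 * ((n:ℝ) * (j:ℝ)) * s := by positivity
            have hR0 : (0:ℝ) ≤ (n:ℝ)^2 * (a:ℝ)^3 := by positivity
            have hsq : (8 * ((n:ℝ) * (j:ℝ)) * s)^2 ≤ ((n:ℝ)^2 * (a:ℝ)^3)^2 := by
              have e : (8 * ((n:ℝ) * (j:ℝ)) * s)^2 = 64 * (n:ℝ)^3 * (j:ℝ)^3 := by
                have hss : s^2 = (n:ℝ) * (j:ℝ) := hs2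
                linear_combination 64*(n:ℝ)^2*(j:ℝ)^2 * hss
              rw [e]
              have : 64 * (n:ℝ)^3 * (j:ℝ)^3 = (n:ℝ)^3 * (64 * (j:ℝ)^3) := by ring
              rw [this]
              calc (n:ℝ)^3 * (64 * (j:ℝ)^3) ≤ (n:ℝ)^3 * ((a:ℝ)^6 * (n:ℝ)) := by
                    apply mul_le_mul_of_nonneg_left h64 (by positivity)
              _ = ((n:ℝ)^2 * (a:ℝ)^3)^2 := by ring
            calc 8 * ((n:ℝ) * (j:ℝ)) * s = Real.sqrt ((8 * ((n:ℝ) * (j:ℝ)) * s)^2) :=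
                  (Real.sqrt_sq hL0).symm
            _ ≤ Real.sqrt (((n:ℝ)^2 * (a:ℝ)^3)^2) := Real.sqrt_le_sqrt hsq
            _ = (n:ℝ)^2 * (a:ℝ)^3 := Real.sqrt_sq hR0
          calc ((P.card : ℕ) : ℝ)^3 ≤ (2*s)^3 := by
                apply pow_le_pow_left₀ (by positivity) hPle
          _ = 8 * s^2 * s := by ring
          _ = 8 * ((n:ℝ) * (j:ℝ)) * s := by rw [hs2]
          _ ≤ (n:ℝ)^2 * (a:ℝ)^3 := hub
  -- assemble
  have hχ : Gᶜ.chromaticNumber.toNat ≤ c :=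
    ENat.toNat_le_toNat hcol.chromaticNumber_le (by simp)
  have h1 : ((Gᶜ.chromaticNumber.toNat : ℕ) : ℝ) ≤ (c:ℝ) := by exact_mod_cast hχ
  have hrpow : ((n:ℝ) ^ ((2:ℝ)/3) * (a:ℝ))^3 = (n:ℝ)^2 * (a:ℝ)^3 := by
    rw [mul_pow]
    congr 1
    rw [← Real.rpow_natCast ((n:ℝ) ^ ((2:ℝ)/3)) 3, ← Real.rpow_mul (Nat.cast_nonneg n)]
    norm_num
  have h2 : (c:ℝ) ≤ (n:ℝ) ^ ((2:ℝ)/3) * (a:ℝ) := by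
    apply cube_le (by positivity) (by positivity)
    rw [hrpow]
    exact hcube
  have h3 : (n:ℝ) ^ ((2:ℝ)/3) * (a:ℝ) ≤ (n:ℝ) ^ ((2:ℝ)/3) * broadcastRate G.Adj := by
    apply mul_le_mul_of_nonneg_left hβ (by positivity)
  linarith
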